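/- Let m ∈ {1, −1}, let ℓ ≥ 1 be an integer, and let ξ ∈ ℂ with |ξ| ∉ {0, 1, …, ℓ−1}. Then, with the product taken over k = 1−ℓ, 2−ℓ, …, ℓ−1 in ascending order from left to right, (∏_{k=1−ℓ}^{ℓ−1} B_m · (k·I₂ + ξ·σ)⁻¹) · B_m = ξ̂_m^{2ℓ−1} · c(ξ) · B_m, where c(ξ) := ∏_{k=1−ℓ}^{ℓ−1} |ξ|/(|ξ|² − k²). -/

import Mathlib

open Matrix Complex
open scoped Kronecker

noncomputable section

def σ1 : Matrix (Fin 2) (Fin 2) ℂ := !![0, 1; 1, 0]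
def σ2 : Matrix (Fin 2) (Fin 2) ℂ := !![0, -Complex.I; Complex.I, 0]
def σ3 : Matrix (Fin 2) (Fin 2) ℂ := !![1, 0; 0, -1]

/-- `ξ·σ = ξ₁σ₁ + ξ₂σ₂ = !![0, conj ξ; ξ, 0]`. -/
def xiSigma (ξ : ℂ) : Matrix (Fin 2) (Fin 2) ℂ := !![0, (starRingEnd ℂ) ξ; ξ, 0]

def Bm (m : ℝ) : Matrix (Fin 2) (Fin 2) ℂ :=
  (((1 + m) / 2 : ℝ) : ℂ) • !![0, 1; 0, 0] + (((1 - m) / 2 : ℝ) : ℂ) • !![0, 0; 1, 0]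

/-- The 2×2 block of the bulk replica Hamiltonian at block position `(k, k')`. -/
def replicaBlock (ξ : ℂ) (m ε : ℝ) (k k' : ℤ) : Matrix (Fin 2) (Fin 2) ℂ :=
  if k' = k then (k : ℂ) • (1 : Matrix (Fin 2) (Fin 2) ℂ) + xiSigma ξ
  else if k' = k - 1 then (ε : ℂ) • Bm m
  else if k' = k + 1 then (ε : ℂ) • (Bm m)ᴴ
  else 0

/-- The bulk replica Hamiltonian `Ĥ_n(ξ)`, block tridiagonal with blocks indexed by
`k, k' ∈ {-n, …, n}` (here realized by `Fin (2n+1)` via `k = j - n`). -/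
def Hrep (n : ℕ) (ξ : ℂ) (m ε : ℝ) :
    Matrix (Fin (2 * n + 1) × Fin 2) (Fin (2 * n + 1) × Fin 2) ℂ :=
  fun p q => replicaBlock ξ m ε ((p.1 : ℤ) - n) ((q.1 : ℤ) - n) p.2 q.2

/-- `ξ̂_m = ξ_m / |ξ|` where `ξ_m = ξ` if `m = 1` and `conj ξ` if `m = -1`. -/
def hatXiM (m : ℝ) (ξ : ℂ) : ℂ :=
  (if m = 1 then ξ else (starRingEnd ℂ) ξ) / (‖ξ‖ : ℂ)

lemma abs_sq_eq (ξ : ℂ) : ((‖ξ‖ : ℝ) : ℂ)^2 = (starRingEnd ℂ) ξ * ξ := by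
  rw [← Complex.normSq_eq_conj_mul_self, ← Complex.sq_norm]
  push_cast; ring

lemma matA (ξ : ℂ) (k : ℤ) :
    ((k : ℂ) • (1 : Matrix (Fin 2) (Fin 2) ℂ) + xiSigma ξ)
      = !![(k:ℂ), (starRingEnd ℂ) ξ; ξ, (k:ℂ)] := by
  ext i j
  fin_cases i <;> fin_cases j <;> simp [xiSigma, Matrix.one_apply]

lemma inv_formula (ξ : ℂ) (k : ℤ) (hd : ((k:ℂ)^2 - (‖ξ‖:ℂ)^2) ≠ 0) :
    ((k : ℂ) • (1 : Matrix (Fin 2) (Fin 2) ℂ) + xiSigma ξ)⁻¹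
      = (((k:ℂ)^2 - (‖ξ‖:ℂ)^2)⁻¹) • !![(k:ℂ), -(starRingEnd ℂ) ξ; -ξ, (k:ℂ)] := by
  have hd' : ((k:ℂ)^2 - (starRingEnd ℂ) ξ * ξ) ≠ 0 := by rwa [← abs_sq_eq]
  apply inv_eq_right_inv
  rw [matA, Matrix.mul_smul, Matrix.mul_fin_two]
  ext i j
  fin_cases i <;> fin_cases j <;>
    (try simp [Matrix.one_apply, abs_sq_eq]) <;> field_simp [hd'] <;> ring <;> simp

lemma key_step (m : ℝ) (hm : m = 1 ∨ m = -1) (ξ : ℂ) (hξ0 : ‖ξ‖ ≠ 0) (k : ℤ)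
    (hd : (‖ξ‖)^2 - ((k:ℤ):ℝ)^2 ≠ 0) :
    Bm m * ((k : ℂ) • (1 : Matrix (Fin 2) (Fin 2) ℂ) + xiSigma ξ)⁻¹ * Bm m
      = (hatXiM m ξ * ((‖ξ‖ / ((‖ξ‖)^2 - ((k:ℤ):ℝ)^2) : ℝ) : ℂ)) • Bm m := by
  have hξ0c : ((‖ξ‖ : ℝ) : ℂ) ≠ 0 := by exact_mod_cast hξ0
  have hdc : ((k:ℂ)^2 - (‖ξ‖:ℂ)^2) ≠ 0 := by
    intro h
    have hre : ((k:ℝ)^2 - (‖ξ‖)^2 : ℝ) = 0 := by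
      exact_mod_cast (show ((((k:ℝ)^2 - (‖ξ‖)^2 : ℝ)) : ℂ) = 0 by push_cast; exact h)
    exact hd (by linarith)
  have hdc2 : (-(k:ℂ)^2 + (‖ξ‖:ℂ)^2) ≠ 0 := by
    intro h; exact hdc (by linear_combination -h)
  rw [inv_formula ξ k hdc]
  rcases hm with hm | hm <;>
  · subst hm
    simp only [Bm, hatXiM]
    ext i j
    fin_cases i <;> fin_cases j <;> simp [show (-1:ℝ) ≠ 1 by norm_num] <;> push_cast <;> field_simp [hdc2]
    rw [eq_div_iff (show ((‖ξ‖:ℂ)^2 - (k:ℂ)^2) ≠ 0 from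
      fun h => hdc2 (by linear_combination h))]
    ring

lemma main_aux (m : ℝ) (hm : m = 1 ∨ m = -1) (ξ : ℂ) (hξ0 : ‖ξ‖ ≠ 0)
    (f : ℕ → ℤ) (n : ℕ)
    (hf : ∀ i, i < n → (‖ξ‖)^2 - ((f i : ℤ):ℝ)^2 ≠ 0) :
    ((List.range n).map
        (fun i => Bm m * (((f i : ℤ) : ℂ) • (1 : Matrix (Fin 2) (Fin 2) ℂ) + xiSigma ξ)⁻¹)).prod
        * Bm m
      = ((hatXiM m ξ) ^ n *
          ((∏ i ∈ Finset.range n,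
              (‖ξ‖ / ((‖ξ‖)^2 - ((f i : ℤ):ℝ)^2)) : ℝ) : ℂ)) • Bm m := by
  induction n with
  | zero => simp
  | succ n ih =>
    rw [List.range_succ, List.map_append, List.prod_append, List.map_singleton,
      List.prod_singleton, Matrix.mul_assoc, Matrix.mul_assoc,
      ← Matrix.mul_assoc (Bm m), key_step m hm ξ hξ0 (f n) (hf n (by omega)),
      Matrix.mul_smul,
      ih (fun i hi => hf i (by omega)), smul_smul,
      Finset.prod_range_succ, pow_succ]
    congr 1
    push_cast
    ring

set_option maxHeartbeats 1000000 in
/-- with the product over `k = 1-ℓ, …, ℓ-1` in ascending order,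
`(∏ B_m (k I₂ + ξ·σ)⁻¹) B_m = ξ̂_m^{2ℓ-1} c(ξ) B_m` with
`c(ξ) = ∏_{k=1-ℓ}^{ℓ-1} |ξ|/(|ξ|² - k²)`. -/
theorem product_formula (m : ℝ) (hm : m = 1 ∨ m = -1) (ℓ : ℕ) (hℓ : 1 ≤ ℓ) (ξ : ℂ)
    (hξ : ∀ j : ℕ, j ≤ ℓ - 1 → ‖ξ‖ ≠ (j : ℝ)) :
    ((List.range (2 * ℓ - 1)).map
        (fun i => Bm m * (((((i : ℤ) + 1 - (ℓ : ℤ)) : ℤ) : ℂ) •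
          (1 : Matrix (Fin 2) (Fin 2) ℂ) + xiSigma ξ)⁻¹)).prod * Bm m
      = ((hatXiM m ξ) ^ (2 * ℓ - 1) *
          ((∏ i ∈ Finset.range (2 * ℓ - 1),
              (‖ξ‖ / ((‖ξ‖) ^ 2 - ((((i : ℤ) + 1 - (ℓ : ℤ)) : ℤ) : ℝ) ^ 2)
              ) : ℝ) : ℂ)) • Bm m := by
  have hξ0 : ‖ξ‖ ≠ 0 := by
    simpa using hξ 0 (by omega)
  have hf : ∀ i, i < 2 * ℓ - 1 →
      (‖ξ‖)^2 - ((((i : ℤ) + 1 - (ℓ : ℤ) : ℤ)):ℝ)^2 ≠ 0 := by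
    intro i hi h
    set k : ℤ := (i : ℤ) + 1 - (ℓ : ℤ) with hk
    have h2 : (‖ξ‖)^2 = ((k:ℤ):ℝ)^2 := by linarith [sub_eq_zero.mp h]
    have h3 : ‖ξ‖ = |((k:ℤ):ℝ)| := by
      have := congrArg Real.sqrt h2
      rwa [Real.sqrt_sq (norm_nonneg ξ), Real.sqrt_sq_eq_abs] at this
    have h4 : |((k:ℤ):ℝ)| = ((k.natAbs : ℕ) : ℝ) := by
      rw [Nat.cast_natAbs, Int.cast_abs]
    have h5 : k.natAbs ≤ ℓ - 1 := by omega
    exact hξ k.natAbs h5 (by rw [h3, h4])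
  simpa only [bind_pure_comp, List.map_eq_map, List.map_map, Function.comp_def] using
    main_aux m hm ξ hξ0 (fun i => (i : ℤ) + 1 - (ℓ : ℤ)) (2 * ℓ - 1) hf
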